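/- Every fs-module with finite hollow dimension is Artinian and Noetherian, hence has finite length; moreover Rad(M) is finitely generated and M has finite Goldie dimension. -/

import Mathlib

/-- A submodule `N` of `M` is small (superfluous): `N + A = M` implies `A = M`. -/
def IsSmallSubmodule {R M : Type*} [Ring R] [AddCommGroup M] [Module R M]
    (N : Submodule R M) : Prop :=
  ∀ A : Submodule R M, N ⊔ A = ⊤ → A = ⊤

/-- `M` is an fs-module: it has only finitely many small submodules. -/
def IsFsModule (R M : Type*) [Ring R] [AddCommGroup M] [Module R M] : Prop :=
  {N : Submodule R M | IsSmallSubmodule N}.Finite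

/-- The radical of `M`, as the sum of all small submodules of `M`. -/
def modRad (R M : Type*) [Ring R] [AddCommGroup M] [Module R M] : Submodule R M :=
  sSup {N : Submodule R M | IsSmallSubmodule N}

/-- The radical of `M`, as the intersection of all maximal submodules of `M`. -/
def modRad' (R M : Type*) [Ring R] [AddCommGroup M] [Module R M] : Submodule R M :=
  sInf {N : Submodule R M | IsCoatom N}

/-- The socle of `M`: the sum of all minimal (simple) submodules of `M`. -/
def modSoc (R M : Type*) [Ring R] [AddCommGroup M] [Module R M] : Submodule R M :=
  sSup {N : Submodule R M | IsAtom N}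

/-- `M` has finite hollow dimension: for every descending chain `N₁ ⊇ N₂ ⊇ ⋯`
there is `n` such that `Nₙ / N_k` is small in `M / N_k` for all `k ≥ n`. -/
def HasFiniteHollowDim (R M : Type*) [Ring R] [AddCommGroup M] [Module R M] : Prop :=
  ∀ N : ℕ → Submodule R M, (∀ i j, i ≤ j → N j ≤ N i) →
    ∃ n, ∀ k, n ≤ k → IsSmallSubmodule (Submodule.map (N k).mkQ (N n))

/-- `M` has finite Goldie dimension: it contains no infinite direct sum of
nonzero submodules. -/
def HasFiniteGoldieDim (R M : Type*) [Ring R] [AddCommGroup M] [Module R M] : Prop :=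
  ¬ ∃ f : ℕ → Submodule R M, (∀ i, f i ≠ ⊥) ∧ iSupIndep f

section Aux

variable {R M : Type*} [Ring R] [AddCommGroup M] [Module R M]

lemma IsSmallSubmodule.of_le {N N' : Submodule R M} (h : IsSmallSubmodule N) (h' : N' ≤ N) :
    IsSmallSubmodule N' := fun A hA =>
  h A (top_unique (hA.ge.trans (sup_le_sup_right h' A)))

lemma IsSmallSubmodule.sup {N₁ N₂ : Submodule R M} (h1 : IsSmallSubmodule N₁)
    (h2 : IsSmallSubmodule N₂) : IsSmallSubmodule (N₁ ⊔ N₂) := by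
  intro A hA
  rw [sup_assoc] at hA
  exact h2 A (h1 _ hA)

lemma isSmallSubmodule_bot : IsSmallSubmodule (⊥ : Submodule R M) := by
  intro A hA; simpa using hA

lemma isSmallSubmodule_sSup {s : Set (Submodule R M)} (hs : s.Finite)
    (h : ∀ N ∈ s, IsSmallSubmodule N) : IsSmallSubmodule (sSup s) := by
  refine Set.Finite.induction_on
    (motive := fun s _ => (∀ N ∈ s, IsSmallSubmodule N) → IsSmallSubmodule (sSup s)) s hs ?_ ?_ h
  · intro _
    simpa [sSup_empty] using (isSmallSubmodule_bot : IsSmallSubmodule (⊥ : Submodule R M))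
  · intro a t _ _ ih h'
    rw [sSup_insert]
    exact (h' a (Set.mem_insert a t)).sup (ih fun N hN => h' N (Set.mem_insert_of_mem a hN))

lemma modRad_small (hfs : IsFsModule R M) : IsSmallSubmodule (modRad R M) :=
  isSmallSubmodule_sSup hfs fun _ hN => hN

lemma small_le_modRad {N : Submodule R M} (h : IsSmallSubmodule N) : N ≤ modRad R M :=
  le_sSup h

/-- Extract the "β" relation from smallness of the image in the quotient. -/
lemma beta_of_small {K L : Submodule R M} (h : IsSmallSubmodule (Submodule.map K.mkQ L))
    {A : Submodule R M} (hA : L ⊔ A = ⊤) : K ⊔ A = ⊤ := by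
  have h1 : Submodule.map K.mkQ L ⊔ Submodule.map K.mkQ A = ⊤ := by
    rw [← Submodule.map_sup, hA, Submodule.map_top, Submodule.range_mkQ]
  have h2 : Submodule.map K.mkQ A = ⊤ := h _ h1
  have h3 := congrArg (Submodule.comap K.mkQ) h2
  rw [Submodule.comap_map_mkQ, Submodule.comap_top] at h3
  exact h3

set_option maxHeartbeats 2000000 in
/-- Every submodule of a module with finite hollow dimension has a weak supplement. -/
lemma exists_weak_supplement (hh : HasFiniteHollowDim R M) (N : Submodule R M) :
    ∃ K : Submodule R M, N ⊔ K = ⊤ ∧ IsSmallSubmodule (N ⊓ K) := by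
  by_contra hcon
  push_neg at hcon
  have key : ∀ K : Submodule R M, N ⊔ K = ⊤ →
      ∃ B : Submodule R M, B ≠ ⊤ ∧ K ⊔ B = ⊤ ∧ N ⊔ (K ⊓ B) = ⊤ := by
    intro K hK
    have hns := hcon K hK
    rw [IsSmallSubmodule] at hns
    push_neg at hns
    obtain ⟨B, hB1, hB2⟩ := hns
    refine ⟨B, hB2, ?_, ?_⟩
    · exact top_unique (hB1.ge.trans (sup_le_sup_right inf_le_right B))
    · have hmod : (N ⊓ K ⊔ B) ⊓ K = N ⊓ K ⊔ B ⊓ K :=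
        sup_inf_assoc_of_le B inf_le_right
      rw [hB1, top_inf_eq] at hmod
      have h4 : N ⊔ (N ⊓ K ⊔ B ⊓ K) = N ⊔ (B ⊓ K) := by
        rw [← sup_assoc, sup_eq_left.mpr (inf_le_left : N ⊓ K ≤ N)]
      rw [inf_comm, ← h4, ← hmod]
      exact hK
  choose B hBne hKB hNKB using key
  let g : ℕ → {K : Submodule R M // N ⊔ K = ⊤} := fun n =>
    Nat.rec ⟨⊤, by simp⟩ (fun _ p => ⟨p.1 ⊓ B p.1 p.2, hNKB p.1 p.2⟩) n
  have hg : ∀ n, (g (n + 1)).1 = (g n).1 ⊓ B (g n).1 (g n).2 := fun n => rfl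
  have hanti : ∀ i j, i ≤ j → (g j).1 ≤ (g i).1 := by
    intro i j hij
    induction hij with
    | refl => exact le_rfl
    | step h ih => exact le_trans (by rw [hg]; exact inf_le_left) ih
  obtain ⟨n, hn⟩ := hh (fun n => (g n).1) hanti
  have hsmall := hn (n + 1) (Nat.le_succ n)
  have hsup : (g (n + 1)).1 ⊔ B (g n).1 (g n).2 = ⊤ :=
    beta_of_small hsmall (hKB (g n).1 (g n).2)
  have hle : (g (n + 1)).1 ≤ B (g n).1 (g n).2 := by rw [hg]; exact inf_le_right
  exact hBne (g n).1 (g n).2 (by rw [sup_eq_right.mpr hle] at hsup; exact hsup)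

lemma antitone_finite_range_stab {α : Type*} [PartialOrder α] {d : ℕ → α}
    (hfin : (Set.range d).Finite) (hd : ∀ i j, i ≤ j → d j ≤ d i) :
    ∃ m, ∀ k, m ≤ k → d k = d m := by
  obtain ⟨a, ⟨m, rfl⟩, ha⟩ := hfin.exists_minimal ⟨d 0, Set.mem_range_self 0⟩
  exact ⟨m, fun k hk => le_antisymm (hd m k hk) (ha (Set.mem_range_self k) (hd m k hk))⟩

lemma monotone_finite_range_stab {α : Type*} [PartialOrder α] {d : ℕ → α}
    (hfin : (Set.range d).Finite) (hd : ∀ i j, i ≤ j → d i ≤ d j) :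
    ∃ m, ∀ k, m ≤ k → d k = d m := by
  obtain ⟨a, ⟨m, rfl⟩, ha⟩ := hfin.exists_maximal ⟨d 0, Set.mem_range_self 0⟩
  exact ⟨m, fun k hk => le_antisymm (ha (Set.mem_range_self k) (hd m k hk)) (hd m k hk)⟩

set_option maxHeartbeats 2000000 in
/-- The heart: in an fs-module with finite hollow dimension every descending chain
of submodules stabilizes. -/
lemma descending_chain_stab (hfs : IsFsModule R M) (hh : HasFiniteHollowDim R M)
    (c : ℕ → Submodule R M) (hc : ∀ i j, i ≤ j → c j ≤ c i) :
    ∃ n, ∀ k, n ≤ k → c k = c n := by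
  set Rad := modRad R M with hRad
  have hRs : IsSmallSubmodule Rad := modRad_small hfs
  obtain ⟨n₀, hn₀⟩ := hh c hc
  -- meet with radical stabilizes since there are finitely many small submodules
  have hdfin : (Set.range fun k => c k ⊓ Rad).Finite := by
    apply hfs.subset
    rintro _ ⟨k, rfl⟩
    exact hRs.of_le inf_le_right
  obtain ⟨m, hm⟩ := antitone_finite_range_stab hdfin
    (fun i j hij => inf_le_inf_right Rad (hc i j hij))
  refine ⟨max n₀ m, fun k hk => ?_⟩
  set n₁ := max n₀ m with hn₁
  have hkn₀ : n₀ ≤ k := le_trans (le_max_left _ _) hk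
  have hβ : ∀ A : Submodule R M, c n₁ ⊔ A = ⊤ → c k ⊔ A = ⊤ := by
    intro A hA
    have h1 : c n₀ ⊔ A = ⊤ :=
      top_unique (hA.ge.trans (sup_le_sup_right (hc n₀ n₁ (le_max_left _ _)) A))
    exact beta_of_small (hn₀ k hkn₀) h1
  -- weak supplement of c n₁ ⊔ Rad
  obtain ⟨K, hK1, hK2⟩ := exists_weak_supplement hh (c n₁ ⊔ Rad)
  have hK2' : (c n₁ ⊔ Rad) ⊓ K ≤ Rad := small_le_modRad hK2
  have hsupk : (c k ⊔ Rad) ⊔ K = ⊤ := by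
    have := hβ (Rad ⊔ K) (by rw [← sup_assoc]; exact hK1)
    rwa [← sup_assoc] at this
  -- sups with the radical agree
  have hsupeq : c n₁ ⊔ Rad = c k ⊔ Rad := by
    have hle1 : c k ⊔ Rad ≤ c n₁ ⊔ Rad := sup_le_sup_right (hc n₁ k hk) Rad
    have hmod : ((c k ⊔ Rad) ⊔ K) ⊓ (c n₁ ⊔ Rad) = (c k ⊔ Rad) ⊔ K ⊓ (c n₁ ⊔ Rad) :=
      sup_inf_assoc_of_le K hle1
    rw [hsupk, top_inf_eq] at hmod
    have : c n₁ ⊔ Rad ≤ c k ⊔ Rad := by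
      rw [hmod]
      apply sup_le le_rfl
      refine le_trans ?_ le_sup_right
      rw [inf_comm] at hK2'
      exact hK2'
    exact le_antisymm this hle1
  -- meets with the radical agree
  have hinfeq : c n₁ ⊓ Rad = c k ⊓ Rad := by
    rw [hm n₁ (le_max_right _ _), hm k (le_trans (le_max_right _ _) hk)]
  exact eq_of_le_of_inf_le_of_sup_le (hc n₁ k hk) hinfeq.le hsupeq.le

set_option maxHeartbeats 2000000 in
/-- Ascending chains stabilize as well. -/
lemma ascending_chain_stab (hfs : IsFsModule R M) (hh : HasFiniteHollowDim R M)
    (c : ℕ → Submodule R M) (hc : ∀ i j, i ≤ j → c i ≤ c j) :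
    ∃ n, ∀ k, n ≤ k → c k = c n := by
  set Rad := modRad R M with hRad
  have hRs : IsSmallSubmodule Rad := modRad_small hfs
  set e : ℕ → Submodule R M := fun k => c k ⊔ Rad with he
  have hemono : ∀ i j, i ≤ j → e i ≤ e j := fun i j hij => sup_le_sup_right (hc i j hij) Rad
  have heRad : ∀ k, Rad ≤ e k := fun k => le_sup_right
  -- meet with radical stabilizes
  have hdfin : (Set.range fun k => c k ⊓ Rad).Finite := by
    apply hfs.subset
    rintro _ ⟨k, rfl⟩
    exact hRs.of_le inf_le_right
  obtain ⟨m₁, hm₁⟩ := monotone_finite_range_stab hdfin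
    (fun i j hij => inf_le_inf_right Rad (hc i j hij))
  -- build a descending chain of complements of `e k` over Rad
  have step : ∀ (F C : Submodule R M), Rad ≤ F → Rad ≤ C → F ⊔ C = ⊤ → F ⊓ C = Rad →
      ∀ F' : Submodule R M, F ≤ F' → Rad ≤ F' →
      ∃ C' : Submodule R M, C' ≤ C ∧ Rad ≤ C' ∧ F' ⊔ C' = ⊤ ∧ F' ⊓ C' = Rad := by
    intro F C hRF hRC hFC hFCi F' hFF' hRF'
    set D := F' ⊓ C with hD
    have hRD : Rad ≤ D := le_inf hRF' hRC
    obtain ⟨E, hE1, hE2⟩ := exists_weak_supplement hh D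
    have hE2' : D ⊓ E ≤ Rad := small_le_modRad hE2
    refine ⟨C ⊓ (E ⊔ Rad), inf_le_left, le_inf hRC le_sup_right, ?_, ?_⟩
    · -- F' ⊔ (C ⊓ (E ⊔ Rad)) = ⊤
      have hDC : D ≤ C := inf_le_right
      have hmod : (D ⊔ (E ⊔ Rad)) ⊓ C = D ⊔ (E ⊔ Rad) ⊓ C :=
        sup_inf_assoc_of_le (E ⊔ Rad) hDC
      have hDE : D ⊔ (E ⊔ Rad) = ⊤ := by
        rw [← sup_assoc, hE1, top_sup_eq]
      rw [hDE, top_inf_eq] at hmod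
      -- hmod : C = D ⊔ (E ⊔ Rad) ⊓ C
      have h1 : F' ⊔ ((E ⊔ Rad) ⊓ C) = F' ⊔ (D ⊔ (E ⊔ Rad) ⊓ C) := by
        rw [← sup_assoc, sup_eq_left.mpr (inf_le_left : F' ⊓ C ≤ F')]
      rw [inf_comm, h1, ← hmod]
      exact top_unique (hFC.ge.trans (sup_le_sup_right hFF' C))
    · -- F' ⊓ (C ⊓ (E ⊔ Rad)) = Rad
      have h1 : F' ⊓ (C ⊓ (E ⊔ Rad)) = D ⊓ (E ⊔ Rad) := by rw [← inf_assoc]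
      have hmod : (Rad ⊔ E) ⊓ D = Rad ⊔ E ⊓ D := sup_inf_assoc_of_le E hRD
      have h2 : D ⊓ (E ⊔ Rad) = Rad ⊔ E ⊓ D := by
        calc D ⊓ (E ⊔ Rad) = (Rad ⊔ E) ⊓ D := by rw [inf_comm, sup_comm]
          _ = Rad ⊔ E ⊓ D := hmod
      rw [h1, h2]
      apply le_antisymm
      · apply sup_le le_rfl
        rw [inf_comm]
        exact hE2'
      · exact le_sup_left
  -- initial complement
  obtain ⟨K₀, hK₀1, hK₀2⟩ := exists_weak_supplement hh (e 0)
  have hC0 : Rad ≤ K₀ ⊔ Rad ∧ e 0 ⊔ (K₀ ⊔ Rad) = ⊤ ∧ e 0 ⊓ (K₀ ⊔ Rad) = Rad := by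
    refine ⟨le_sup_right, by rw [← sup_assoc, hK₀1, top_sup_eq], ?_⟩
    have hmod : (Rad ⊔ K₀) ⊓ e 0 = Rad ⊔ K₀ ⊓ e 0 := sup_inf_assoc_of_le K₀ (heRad 0)
    rw [sup_comm K₀ Rad, inf_comm, hmod]
    apply le_antisymm
    · apply sup_le le_rfl
      rw [inf_comm]
      exact small_le_modRad hK₀2
    · exact le_sup_left
  -- recursive construction
  let Cs : ℕ → {C : Submodule R M // Rad ≤ C ∧ e 0 ≤ e 0 ∧ True} := fun _ => ⟨⊤, le_top, le_rfl, trivial⟩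
  have hrec : ∃ C : ℕ → Submodule R M, (∀ k, Rad ≤ C k ∧ e k ⊔ C k = ⊤ ∧ e k ⊓ C k = Rad) ∧
      ∀ k, C (k + 1) ≤ C k := by
    have hstep : ∀ k (C : {C : Submodule R M // Rad ≤ C ∧ e k ⊔ C = ⊤ ∧ e k ⊓ C = Rad}),
        ∃ C' : Submodule R M, C' ≤ C.1 ∧ Rad ≤ C' ∧ e (k + 1) ⊔ C' = ⊤ ∧ e (k + 1) ⊓ C' = Rad := by
      intro k C
      exact step (e k) C.1 (heRad k) C.2.1 C.2.2.1 C.2.2.2 (e (k + 1))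
        (hemono k (k + 1) (Nat.le_succ k)) (heRad (k + 1))
    choose f hf1 hf2 hf3 hf4 using hstep
    let g : (k : ℕ) → {C : Submodule R M // Rad ≤ C ∧ e k ⊔ C = ⊤ ∧ e k ⊓ C = Rad} := fun k =>
      Nat.rec ⟨K₀ ⊔ Rad, hC0⟩ (fun k p => ⟨f k p, hf2 k p, hf3 k p, hf4 k p⟩) k
    refine ⟨fun k => (g k).1, fun k => (g k).2, fun k => ?_⟩
    exact hf1 k (g k)
  obtain ⟨C, hCinv, hCdesc⟩ := hrec
  have hCanti : ∀ i j, i ≤ j → C j ≤ C i := by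
    intro i j hij
    induction hij with
    | refl => exact le_rfl
    | step h ih => exact le_trans (hCdesc _) ih
  obtain ⟨m₂, hm₂⟩ := descending_chain_stab hfs hh C hCanti
  refine ⟨max m₁ m₂, fun k hk => ?_⟩
  set n := max m₁ m₂ with hn
  have hnk : n ≤ k := hk
  -- e n = e k via cancellation with the common complement
  have hCeq : C k = C n := by
    rw [hm₂ k (le_trans (le_max_right _ _) hk), hm₂ n (le_max_right _ _)]
  have heeq : e n = e k := by
    have h1 : e n ≤ e k := hemono n k hnk
    have h2 : e k ⊓ C n = Rad := by rw [← hCeq]; exact (hCinv k).2.2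
    have h3 : e k ⊔ C n = ⊤ := by rw [← hCeq]; exact (hCinv k).2.1
    exact eq_of_le_of_inf_le_of_sup_le h1
      (by rw [h2, (hCinv n).2.2]) (by rw [h3, (hCinv n).2.1])
  have hinfeq : c n ⊓ Rad = c k ⊓ Rad := by
    rw [hm₁ n (le_max_left _ _), hm₁ k (le_trans (le_max_left _ _) hk)]
  exact (eq_of_le_of_inf_le_of_sup_le (hc n k hnk) hinfeq.ge heeq.ge).symm

end Aux

set_option maxHeartbeats 2000000 in
theorem fs_finite_hollow_structure (R M : Type*) [Ring R] [AddCommGroup M] [Module R M]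
    (hfs : IsFsModule R M) (hh : HasFiniteHollowDim R M) :
    IsArtinian R M ∧ IsNoetherian R M ∧ IsFiniteLength R M ∧
      (modRad R M).FG ∧ HasFiniteGoldieDim R M := by
  have hart : IsArtinian R M := by
    rw [← monotone_stabilizes_iff_artinian]
    intro f
    have := descending_chain_stab hfs hh (fun n => OrderDual.ofDual (f n))
      (fun i j hij => f.monotone hij)
    obtain ⟨n, hn⟩ := this
    exact ⟨n, fun m hm => (hn m hm).symm⟩
  have hnoeth : IsNoetherian R M := by
    rw [← monotone_stabilizes_iff_noetherian]
    intro f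
    obtain ⟨n, hn⟩ := ascending_chain_stab hfs hh (fun n => f n) (fun i j hij => f.monotone hij)
    exact ⟨n, fun m hm => (hn m hm).symm⟩
  have hfl : IsFiniteLength R M :=
    isFiniteLength_iff_isNoetherian_isArtinian.mpr ⟨hnoeth, hart⟩
  refine ⟨hart, hnoeth, hfl, IsNoetherian.noetherian _, ?_⟩
  rintro ⟨f, hne, hind⟩
  obtain ⟨n, hn⟩ := monotone_stabilizes_iff_noetherian.mpr hnoeth (partialSups f)
  have h1 : f (n + 1) ≤ partialSups f n := by
    have := hn (n + 1) (Nat.le_succ n)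
    rw [this]
    exact le_partialSups_of_le f (le_refl (n + 1))
  have h2 : partialSups f n ≤ ⨆ (j) (_ : j ≠ n + 1), f j := by
    apply partialSups_le
    intro i hi
    exact le_iSup_of_le i (le_iSup_of_le (by omega) le_rfl)
  exact hne (n + 1) ((hind (n + 1)).eq_bot_of_le (h1.trans h2))
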